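/- Let V be a 3-dimensional real inner product space, let h be a symmetric bilinear form on V (the Hessian ∇²u), and let x be a vector (the gradient ∇u) with |x| ≠ 0. Define X = h(x,·)♯ − (1/3)(tr h)x. Then |X| ≤ √(2/3)·|x|·√(|h|² − (1/3)(tr h)²), where |h| is the Hilbert–Schmidt norm of h. -/

import Mathlib

open Finset

set_option maxHeartbeats 1000000 in
/-- refined Kato algebraic step. -/
theorem stmt_0 (h : Matrix (Fin 3) (Fin 3) ℝ) (x : Fin 3 → ℝ)
    (hsym : h.IsSymm) (hx : Real.sqrt (∑ i, x i ^ 2) ≠ 0)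
    (X : Fin 3 → ℝ)
    (hX : ∀ i, X i = (∑ j, h i j * x j) - (1/3) * h.trace * x i) :
    Real.sqrt (∑ i, X i ^ 2) ≤
      Real.sqrt (2/3) * Real.sqrt (∑ i, x i ^ 2) *
        Real.sqrt ((∑ i, ∑ j, h i j ^ 2) - (1/3) * h.trace ^ 2) := by
  set t := h.trace with ht
  set A : Matrix (Fin 3) (Fin 3) ℝ := h - (t/3) • 1 with hA_def
  have hA : A.IsHermitian := by
    rw [Matrix.IsHermitian, Matrix.conjTranspose_eq_transpose_of_trivial]
    rw [hA_def, Matrix.transpose_sub, Matrix.transpose_smul, Matrix.transpose_one, hsym]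
  have hAentry : ∀ i j, A i j = A j i := by
    intro i j
    have := congrFun (congrFun hA j) i
    simpa using this
  set lam : Fin 3 → ℝ := hA.eigenvalues with hlam
  set b := hA.eigenvectorBasis with hb
  set U : Matrix (Fin 3) (Fin 3) ℝ := (hA.eigenvectorUnitary : Matrix (Fin 3) (Fin 3) ℝ) with hU
  have hUU : star U * U = 1 := Matrix.mem_unitaryGroup_iff'.mp hA.eigenvectorUnitary.2
  -- spectral consequences
  have specA : A = U * Matrix.diagonal lam * star U := by
    have := hA.spectral_theorem
    simpa using this
  have trA : Matrix.trace A = ∑ i, lam i := by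
    rw [specA, Matrix.trace_mul_comm, ← mul_assoc, hUU, one_mul, Matrix.trace_diagonal]
  have trA0 : ∑ i, lam i = 0 := by
    rw [← trA, hA_def, Matrix.trace_sub, Matrix.trace_smul, Matrix.trace_one]
    simp [ht]
  have trA2 : Matrix.trace (A * A) = ∑ i, lam i ^ 2 := by
    rw [specA]
    have h1 : star U * (U * (Matrix.diagonal lam * star U))
        = Matrix.diagonal lam * star U := by
      rw [← mul_assoc, hUU, one_mul]
    have : (U * Matrix.diagonal lam * star U) * (U * Matrix.diagonal lam * star U)
        = U * (Matrix.diagonal lam * Matrix.diagonal lam) * star U := by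
      simp only [mul_assoc]
      rw [h1]
    rw [this, Matrix.trace_mul_comm, ← mul_assoc, hUU, one_mul,
      Matrix.diagonal_mul_diagonal, Matrix.trace_diagonal]
    exact Finset.sum_congr rfl fun i _ => (sq (lam i)).symm ▸ rfl
  have sumsq : ∑ i, lam i ^ 2 = (∑ i, ∑ j, h i j ^ 2) - (1/3) * t ^ 2 := by
    rw [← trA2]
    have expand : Matrix.trace (A * A) = ∑ i, ∑ j, A i j * A j i := by
      simp [Matrix.trace, Matrix.mul_apply, Matrix.diag]
    rw [expand]
    have : t = h 0 0 + h 1 1 + h 2 2 := by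
      simp [ht, Matrix.trace, Matrix.diag, Fin.sum_univ_three]
    have hs : ∀ i j : Fin 3, h j i = h i j := fun i j => congrFun (congrFun hsym i) j
    simp [hA_def, Matrix.sub_apply, Matrix.smul_apply, Matrix.one_apply, Fin.sum_univ_three]
    rw [hs 0 1, hs 0 2, hs 1 2, this]
    ring
  -- X = A *ᵥ x
  have hXAx : ∀ i, X i = ∑ j, A i j * x j := by
    intro i
    fin_cases i <;>
      simp [hX, hA_def, Fin.sum_univ_three, Matrix.one_apply, Matrix.sub_apply] <;> ring
  -- coordinates
  have hbi : ∀ i k, ∑ j, A k j * b i j = lam i * b i k := by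
    intro i k
    have := congrFun (hA.mulVec_eigenvectorBasis i) k
    simpa [Matrix.mulVec, dotProduct] using this
  have hrepr : ∀ i, b.repr (WithLp.toLp 2 X) i = lam i * b.repr (WithLp.toLp 2 x) i := by
    intro i
    simp only [b.repr_apply_apply]
    have e1 : (inner ℝ (b i) (WithLp.toLp 2 X) : ℝ) = ∑ j, b i j * X j := by
      simp [PiLp.inner_apply, RCLike.inner_apply, mul_comm]
    have e2 : (inner ℝ (b i) (WithLp.toLp 2 x) : ℝ) = ∑ j, b i j * x j := by
      simp [PiLp.inner_apply, RCLike.inner_apply, mul_comm]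
    rw [e1, e2]
    calc ∑ j, b i j * X j = ∑ j, ∑ k, b i j * (A j k * x k) := by
          refine Finset.sum_congr rfl fun j _ => ?_
          rw [hXAx j, Finset.mul_sum]
      _ = ∑ k, (∑ j, A k j * b i j) * x k := by
          rw [Finset.sum_comm]
          refine Finset.sum_congr rfl fun k _ => ?_
          rw [Finset.sum_mul]
          refine Finset.sum_congr rfl fun j _ => ?_
          rw [hAentry j k]; ring
      _ = ∑ k, lam i * (b i k * x k) := by
          refine Finset.sum_congr rfl fun k _ => ?_
          rw [hbi i k]; ring
      _ = lam i * ∑ j, b i j * x j := by rw [Finset.mul_sum]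
  have frame : ∀ v : EuclideanSpace ℝ (Fin 3), ∑ i, v i ^ 2 = ∑ i, (b.repr v i) ^ 2 := by
    intro v
    have h1 : ‖v‖ = ‖b.repr v‖ := (b.repr.norm_map v).symm
    have h2 : ‖v‖ ^ 2 = ∑ i, v i ^ 2 := by
      rw [EuclideanSpace.norm_eq, Real.sq_sqrt (by positivity)]
      simp [sq_abs]
    have h3 : ‖b.repr v‖ ^ 2 = ∑ i, (b.repr v i) ^ 2 := by
      rw [EuclideanSpace.norm_eq, Real.sq_sqrt (by positivity)]
      simp [sq_abs]
    rw [← h2, h1, h3]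
  have sumX : ∑ i, X i ^ 2 = ∑ i, (lam i * b.repr (WithLp.toLp 2 x) i) ^ 2 := by
    rw [show ∑ i, X i ^ 2 = _ from frame (WithLp.toLp 2 X)]
    exact Finset.sum_congr rfl fun i _ => by rw [hrepr i]
  have sumx : ∑ i, x i ^ 2 = ∑ i, (b.repr (WithLp.toLp 2 x) i) ^ 2 := frame (WithLp.toLp 2 x)
  -- key inequality
  have key : ∑ i, X i ^ 2 ≤ 2/3 * (∑ i, x i ^ 2) * ((∑ i, ∑ j, h i j ^ 2) - (1/3) * t ^ 2) := by
    rw [sumX, sumx, ← sumsq]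
    have hl : lam 0 + lam 1 + lam 2 = 0 := by
      have := trA0; rwa [Fin.sum_univ_three] at this
    simp only [Fin.sum_univ_three]
    have h0 : lam 0 = -(lam 1 + lam 2) := by linarith
    have e0 : lam 0 ^ 2 ≤ 2/3 * (lam 0 ^ 2 + lam 1 ^ 2 + lam 2 ^ 2) := by
      rw [h0]; nlinarith [sq_nonneg (lam 1 - lam 2)]
    have e1 : lam 1 ^ 2 ≤ 2/3 * (lam 0 ^ 2 + lam 1 ^ 2 + lam 2 ^ 2) := by
      have h1' : lam 1 = -(lam 0 + lam 2) := by linarith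
      rw [h1']; nlinarith [sq_nonneg (lam 0 - lam 2)]
    have e2 : lam 2 ^ 2 ≤ 2/3 * (lam 0 ^ 2 + lam 1 ^ 2 + lam 2 ^ 2) := by
      have h2' : lam 2 = -(lam 0 + lam 1) := by linarith
      rw [h2']; nlinarith [sq_nonneg (lam 0 - lam 1)]
    nlinarith [mul_le_mul_of_nonneg_right e0 (sq_nonneg ((b.repr (WithLp.toLp 2 x) 0 : ℝ))),
      mul_le_mul_of_nonneg_right e1 (sq_nonneg ((b.repr (WithLp.toLp 2 x) 1 : ℝ))),
      mul_le_mul_of_nonneg_right e2 (sq_nonneg ((b.repr (WithLp.toLp 2 x) 2 : ℝ))),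
      sq_nonneg (lam 0 * (b.repr (WithLp.toLp 2 x) 0 : ℝ)), sq_nonneg (lam 1 * (b.repr (WithLp.toLp 2 x) 1 : ℝ)), sq_nonneg (lam 2 * (b.repr (WithLp.toLp 2 x) 2 : ℝ))]
  have h23 : (0:ℝ) ≤ 2/3 := by norm_num
  have hxs : (0:ℝ) ≤ ∑ i, x i ^ 2 := by positivity
  calc Real.sqrt (∑ i, X i ^ 2)
      ≤ Real.sqrt (2/3 * (∑ i, x i ^ 2) * ((∑ i, ∑ j, h i j ^ 2) - (1/3) * t ^ 2)) :=
        Real.sqrt_le_sqrt key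
    _ = Real.sqrt (2/3) * Real.sqrt (∑ i, x i ^ 2) *
        Real.sqrt ((∑ i, ∑ j, h i j ^ 2) - (1/3) * t ^ 2) := by
        rw [Real.sqrt_mul (by positivity), Real.sqrt_mul h23]
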